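/- Let R be a reflexive real Banach space and let G ⊆ L(R) be a set of surjective linear isometries of R which is commutative, i.e. A ∘ B = B ∘ A for all A, B ∈ G. If S and T both belong to the closure of G in the weak operator topology of L(R), then S ∘ T = T ∘ S. -/

import Mathlib

open Filter Topology OnePoint

/-- A sequence in a normed space is bounded. -/
def IsBoundedSeq {X : Type*} [NormedAddCommGroup X] (x : ℕ → X) : Prop :=
  ∃ C : ℝ, ∀ n, ‖x n‖ ≤ C

/-- A real Banach space is *stable* if for all bounded sequences `(x n)`, `(y m)` in `X` such
that both iterated limits of `‖x n + y m‖` exist, the two iterated limits coincide. -/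
def IsStable (X : Type*) [NormedAddCommGroup X] : Prop :=
  ∀ (x y : ℕ → X), IsBoundedSeq x → IsBoundedSeq y →
    ∀ (f g : ℕ → ℝ) (a b : ℝ),
      (∀ n, Tendsto (fun m => ‖x n + y m‖) atTop (𝓝 (f n))) →
      Tendsto f atTop (𝓝 a) →
      (∀ m, Tendsto (fun n => ‖x n + y m‖) atTop (𝓝 (g m))) →
      Tendsto g atTop (𝓝 b) →
      a = b

/-- The bounded sequence `(x n)` determines the type `τ`, i.e. `τ v = lim_n ‖v + x n‖`. -/
def DeterminesType {X : Type*} [NormedAddCommGroup X] (x : ℕ → X) (τ : X → ℝ) : Prop :=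
  IsBoundedSeq x ∧ ∀ v : X, Tendsto (fun n => ‖v + x n‖) atTop (𝓝 (τ v))

/-- A *type* on `X` is a function realized as `τ v = lim_n ‖v + x n‖` for some bounded
sequence `(x n)` in `X`. -/
def IsType {X : Type*} [NormedAddCommGroup X] (τ : X → ℝ) : Prop :=
  ∃ x : ℕ → X, DeterminesType x τ

/-- The space of types on `X`, topologized by pointwise convergence on `X`. -/
def TypeSpace (X : Type*) [NormedAddCommGroup X] : Type _ := {τ : X → ℝ // IsType τ}

instance (X : Type*) [NormedAddCommGroup X] : TopologicalSpace (TypeSpace X) :=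
  inferInstanceAs (TopologicalSpace {τ : X → ℝ // IsType τ})

/-- The degenerate type `τ_x : y ↦ ‖x + y‖`. -/
def degenType {X : Type*} [NormedAddCommGroup X] (x : X) : TypeSpace X :=
  ⟨fun y => ‖x + y‖, fun _ => x, ⟨‖x‖, fun _ => le_rfl⟩, fun v => by
    show Tendsto (fun _ : ℕ => ‖v + x‖) atTop (𝓝 ‖x + v‖)
    rw [add_comm x v]; exact tendsto_const_nhds⟩

/-- A bundled separable reflexive real Banach space. -/
structure SepReflBanach where
  carrier : Type
  [normedGrp : NormedAddCommGroup carrier]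
  [normedMod : NormedSpace ℝ carrier]
  [complete : CompleteSpace carrier]
  [separable : TopologicalSpace.SeparableSpace carrier]
  reflexive : Function.Surjective (NormedSpace.inclusionInDoubleDual ℝ carrier)

attribute [instance] SepReflBanach.normedGrp SepReflBanach.normedMod
  SepReflBanach.complete SepReflBanach.separable

/-- Let `R` be a reflexive real Banach space and `G ⊆ L(R)` a commuting set
of surjective linear isometries of `R`. Any two elements of the closure of `G` in the weak
operator topology commute. -/
theorem stmt_8 (R : Type*) [NormedAddCommGroup R] [NormedSpace ℝ R] [CompleteSpace R]
    (hrefl : Function.Surjective (NormedSpace.inclusionInDoubleDual ℝ R))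
    (G : Set (R →L[ℝ] R))
    (hiso : ∀ A ∈ G, Function.Surjective A ∧ ∀ r : R, ‖A r‖ = ‖r‖)
    (hcomm : ∀ A ∈ G, ∀ B ∈ G, A.comp B = B.comp A)
    (S T : R →L[ℝ] R)
    (hS : (ContinuousLinearMapWOT.ofCLM S : R →WOT[ℝ] R) ∈
      closure ((fun A => (ContinuousLinearMapWOT.ofCLM A : R →WOT[ℝ] R)) '' G))
    (hT : (ContinuousLinearMapWOT.ofCLM T : R →WOT[ℝ] R) ∈
      closure ((fun A => (ContinuousLinearMapWOT.ofCLM A : R →WOT[ℝ] R)) '' G)) :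
    S.comp T = T.comp S := by
  -- For a fixed operator `A`, the set of WOT-operators commuting with `A` is WOT-closed.
  have key : ∀ A : R →L[ℝ] R, IsClosed {B : (R →WOT[ℝ] R) |
      ∀ (x : R) (y : StrongDual ℝ R), y (A (B x)) = y (B (A x))} := by
    intro A
    have : {B : (R →WOT[ℝ] R) |
        ∀ (x : R) (y : StrongDual ℝ R), y (A (B x)) = y (B (A x))} =
        ⋂ (x : R), ⋂ (y : StrongDual ℝ R),
          {B : (R →WOT[ℝ] R) | y (A (B x)) = y (B (A x))} := by
      ext B; simp [Set.mem_iInter]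
    rw [this]
    refine isClosed_iInter fun x => isClosed_iInter fun y => ?_
    have h1 : Continuous fun B : (R →WOT[ℝ] R) => y (A (B x)) :=
      ContinuousLinearMapWOT.continuous_dual_apply x (y.comp A)
    have h2 : Continuous fun B : (R →WOT[ℝ] R) => y (B (A x)) :=
      ContinuousLinearMapWOT.continuous_dual_apply (A x) y
    exact isClosed_eq h1 h2
  -- Step 1: T commutes with every A ∈ G (in the weak sense).
  have hTA : ∀ A ∈ G, ∀ (x : R) (y : StrongDual ℝ R), y (A (T x)) = y (T (A x)) := by
    intro A hA
    have hsub : (fun A => (ContinuousLinearMapWOT.ofCLM A : R →WOT[ℝ] R)) '' G ⊆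
        {B : (R →WOT[ℝ] R) |
          ∀ (x : R) (y : StrongDual ℝ R), y (A (B x)) = y (B (A x))} := by
      rintro _ ⟨B, hB, rfl⟩ x y
      have := hcomm A hA B hB
      have hx : A (B x) = B (A x) := by
        have := congrArg (fun f : R →L[ℝ] R => f x) this
        simpa using this
      simp only [ContinuousLinearMap.toWOT_apply, hx]
    exact (closure_minimal hsub (key A)) hT
  -- Step 2: S commutes with T.
  have hST : ∀ (x : R) (y : StrongDual ℝ R), y (T (S x)) = y (S (T x)) := by
    have hsub : (fun A => (ContinuousLinearMapWOT.ofCLM A : R →WOT[ℝ] R)) '' G ⊆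
        {B : (R →WOT[ℝ] R) |
          ∀ (x : R) (y : StrongDual ℝ R), y (T (B x)) = y (B (T x))} := by
      rintro _ ⟨A, hA, rfl⟩ x y
      simp only [ContinuousLinearMap.toWOT_apply]
      exact (hTA A hA x y).symm
    exact (closure_minimal hsub (key T)) hS
  -- Conclude using that the dual separates points.
  ext x
  simp only [ContinuousLinearMap.comp_apply]
  by_contra h
  obtain ⟨y, hy⟩ := SeparatingDual.exists_ne_zero (R := ℝ) (sub_ne_zero_of_ne h)
  apply hy
  have h2 := hST x y
  simp [map_sub, h2]
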